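/- arXiv:1102.4351 — 2 statements merged into one kernel-verified Lean document; each statement's English description precedes it below -/
import Mathlib

section
/- Let p ≥ 1, let S be a symmetric positive definite p×p real matrix, let μ_0, μ_1 ∈ ℝ^p, let f be a probability density on ℝ (f ≥ 0, ∫ f = 1) and s_0, s_1 ∈ ℝ. Set α_{jl} := ∫ f(v − s_j) f(v − s_l) / (f(v − s_0) + f(v − s_1)) dv for j, l ∈ {0,1} (with the integrand taken to be 0 where the denominator vanishes), and A := (S + μ_0 μ_0ᵀ + μ_1 μ_1ᵀ)^{−1} (α_{00} μ_0 μ_0ᵀ + α_{11} μ_1 μ_1ᵀ + α_{01} (μ_0 μ_1ᵀ + μ_1 μ_0ᵀ)). Then there exists an integer k₀ ≥ 1 such that ‖A^{k₀} v‖₂ < ‖v‖₂ for every nonzero v ∈ ℝ^p; moreover, when p = 1 one can take k₀ = 1. -/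
open MeasureTheory Matrix

lemma bilin_vecMulVec {p : ℕ} (a b u v : Fin p → ℝ) :
    u ⬝ᵥ (vecMulVec a b).mulVec v = (a ⬝ᵥ u) * (b ⬝ᵥ v) := by
  simp only [dotProduct, mulVec, vecMulVec_apply, Finset.mul_sum, Finset.sum_mul]
  rw [Finset.sum_comm]
  exact Finset.sum_congr rfl fun i _ => Finset.sum_congr rfl fun j _ => by ring

/-- Cauchy–Schwarz for a positive semidefinite symmetric bilinear form given by N. -/
lemma psd_cauchy_schwarz {p : ℕ} (N : Matrix (Fin p) (Fin p) ℝ)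
    (hNsymm : ∀ a b : Fin p → ℝ, a ⬝ᵥ N.mulVec b = b ⬝ᵥ N.mulVec a)
    (hN0 : ∀ v : Fin p → ℝ, 0 ≤ v ⬝ᵥ N.mulVec v) (u v : Fin p → ℝ) :
    (u ⬝ᵥ N.mulVec v) ^ 2 ≤ (u ⬝ᵥ N.mulVec u) * (v ⬝ᵥ N.mulVec v) := by
  have expand : ∀ t : ℝ, 0 ≤ (v ⬝ᵥ N.mulVec v) * (t * t) + (2 * (u ⬝ᵥ N.mulVec v)) * t
      + (u ⬝ᵥ N.mulVec u) := by
    intro t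
    have h := hN0 (u + t • v)
    have heq : (u + t • v) ⬝ᵥ N.mulVec (u + t • v)
        = (v ⬝ᵥ N.mulVec v) * (t * t) + (2 * (u ⬝ᵥ N.mulVec v)) * t + (u ⬝ᵥ N.mulVec u) := by
      simp only [Matrix.mulVec_add, Matrix.mulVec_smul, dotProduct_add, add_dotProduct,
        dotProduct_smul, smul_dotProduct, smul_eq_mul]
      rw [hNsymm v u]
      ring
    rw [heq] at h
    exact h
  have hd := discrim_le_zero expand
  rw [discrim] at hd
  nlinarith [hd]

lemma step_contraction {p : ℕ} (M N A : Matrix (Fin p) (Fin p) ℝ)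
    (hNsymm : ∀ a b : Fin p → ℝ, a ⬝ᵥ N.mulVec b = b ⬝ᵥ N.mulVec a)
    (hMA : ∀ v, M.mulVec (A.mulVec v) = N.mulVec v)
    (hN0 : ∀ v : Fin p → ℝ, 0 ≤ v ⬝ᵥ N.mulVec v)
    (hM0 : ∀ v : Fin p → ℝ, 0 ≤ v ⬝ᵥ M.mulVec v)
    (c : ℝ) (hc : ∀ v : Fin p → ℝ, v ⬝ᵥ N.mulVec v ≤ c * (v ⬝ᵥ M.mulVec v)) :
    ∀ v : Fin p → ℝ,
      (A.mulVec v) ⬝ᵥ M.mulVec (A.mulVec v) ≤ c ^ 2 * (v ⬝ᵥ M.mulVec v) := by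
  intro v
  set w : Fin p → ℝ := A.mulVec v with hw
  set X : ℝ := w ⬝ᵥ M.mulVec w with hX
  have hXN : X = w ⬝ᵥ N.mulVec v := by rw [hX, hMA]
  have hCS : (w ⬝ᵥ N.mulVec v) ^ 2 ≤ (w ⬝ᵥ N.mulVec w) * (v ⬝ᵥ N.mulVec v) :=
    psd_cauchy_schwarz N hNsymm hN0 w v
  have h1 : w ⬝ᵥ N.mulVec w ≤ c * X := hc w
  have h2 : v ⬝ᵥ N.mulVec v ≤ c * (v ⬝ᵥ M.mulVec v) := hc v
  have hX0 : 0 ≤ X := hM0 w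
  have hqv0 : 0 ≤ v ⬝ᵥ M.mulVec v := hM0 v
  have hprod : (w ⬝ᵥ N.mulVec w) * (v ⬝ᵥ N.mulVec v) ≤ (c * X) * (c * (v ⬝ᵥ M.mulVec v)) :=
    mul_le_mul h1 h2 (hN0 v) ((hN0 w).trans h1)
  have hfinal : X ^ 2 ≤ c ^ 2 * X * (v ⬝ᵥ M.mulVec v) := by
    calc X ^ 2 = (w ⬝ᵥ N.mulVec v) ^ 2 := by rw [hXN]
      _ ≤ (w ⬝ᵥ N.mulVec w) * (v ⬝ᵥ N.mulVec v) := hCS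
      _ ≤ (c * X) * (c * (v ⬝ᵥ M.mulVec v)) := hprod
      _ = c ^ 2 * X * (v ⬝ᵥ M.mulVec v) := by ring
  rcases hX0.lt_or_eq with hXpos | hXzero
  · nlinarith
  · rw [← hXzero]
    positivity

/-- quadratic form lower bound for a positive definite matrix -/
lemma posdef_lower {p : ℕ} (hp : 1 ≤ p) (S : Matrix (Fin p) (Fin p) ℝ) (hS : S.PosDef) :
    ∃ ε > 0, ∀ v : Fin p → ℝ, ε * ∑ i, v i ^ 2 ≤ v ⬝ᵥ S.mulVec v := by
  set φ : (Fin p → ℝ) → ℝ := fun v => v ⬝ᵥ S.mulVec v with hφ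
  set ψ : (Fin p → ℝ) → ℝ := fun v => ∑ i, v i ^ 2 with hψ
  have hφc : Continuous φ := by
    have : φ = fun v => ∑ i, ∑ j, v i * (S i j * v j) := by
      funext v
      simp [hφ, dotProduct, mulVec, Finset.mul_sum]
    rw [this]
    exact continuous_finset_sum _ fun i _ => continuous_finset_sum _ fun j _ =>
      (continuous_apply i).mul (continuous_const.mul (continuous_apply j))
  have hψc : Continuous ψ := by
    apply continuous_finset_sum
    intro i _
    exact (continuous_apply i).pow 2
  set K : Set (Fin p → ℝ) := ψ ⁻¹' {1} with hK
  have hKc : IsCompact K := by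
    apply Metric.isCompact_of_isClosed_isBounded
    · exact IsClosed.preimage hψc isClosed_singleton
    · rw [Metric.isBounded_iff_subset_closedBall 0]
      refine ⟨1, fun v hv => ?_⟩
      simp only [Metric.mem_closedBall, dist_zero_right]
      have hv1 : ∑ i, v i ^ 2 = 1 := hv
      rw [pi_norm_le_iff_of_nonneg (by norm_num)]
      intro i
      have h1 : v i ^ 2 ≤ 1 := by
        rw [← hv1]
        exact Finset.single_le_sum (fun j _ => sq_nonneg (v j)) (Finset.mem_univ i)
      have := abs_nonneg (v i)
      rw [Real.norm_eq_abs]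
      nlinarith [sq_abs (v i)]
  have hKne : K.Nonempty := by
    refine ⟨Pi.single ⟨0, hp⟩ 1, ?_⟩
    have : ψ (Pi.single ⟨0, hp⟩ 1) = 1 := by
      rw [hψ]
      simp only
      rw [Finset.sum_eq_single ⟨0, hp⟩]
      · simp
      · intro j _ hj; simp [Pi.single_apply, hj]
      · simp
    exact this
  obtain ⟨w, hwK, hw⟩ := hKc.exists_isMinOn hKne hφc.continuousOn
  have hw1 : ∑ i, w i ^ 2 = 1 := hwK
  have hw0 : w ≠ 0 := by
    intro h
    rw [h] at hw1
    simp at hw1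
  have hε : 0 < φ w := by simpa using hS.dotProduct_mulVec_pos hw0
  refine ⟨φ w, hε, fun v => ?_⟩
  by_cases hv : v = 0
  · subst hv; simp [hφ]
  · set n : ℝ := Real.sqrt (∑ i, v i ^ 2) with hn
    have hsum : 0 < ∑ i, v i ^ 2 := by
      obtain ⟨i, hi⟩ := Function.ne_iff.mp hv
      have : 0 < v i ^ 2 := by
        have := sq_nonneg (v i)
        rcases this.lt_or_eq with h | h
        · exact h
        · exact absurd (pow_eq_zero_iff (by norm_num) |>.mp h.symm) hi
      exact lt_of_lt_of_le this
        (Finset.single_le_sum (fun j _ => sq_nonneg (v j)) (Finset.mem_univ i))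
    have hnpos : 0 < n := Real.sqrt_pos.mpr hsum
    have hn2 : n ^ 2 = ∑ i, v i ^ 2 := Real.sq_sqrt hsum.le
    set u : Fin p → ℝ := n⁻¹ • v with hu
    have huK : u ∈ K := by
      show ψ u = 1
      rw [hψ]
      simp only [hu, Pi.smul_apply, smul_eq_mul, mul_pow]
      rw [← Finset.mul_sum, ← hn2]
      field_simp
    have hφu : φ u = (n ^ 2)⁻¹ * φ v := by
      rw [hφ]
      simp only [hu]
      rw [Matrix.mulVec_smul, smul_dotProduct, dotProduct_smul]
      simp [smul_eq_mul]; ring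
    have : φ w ≤ φ u := hw huK
    rw [hφu] at this
    have hn2pos : (0:ℝ) < n ^ 2 := by positivity
    have h2 : φ w * n ^ 2 ≤ φ v := by
      calc φ w * n ^ 2 ≤ ((n ^ 2)⁻¹ * φ v) * n ^ 2 :=
            mul_le_mul_of_nonneg_right this hn2pos.le
        _ = φ v := by field_simp
    calc φ w * ∑ i, v i ^ 2 = φ w * n ^ 2 := by rw [hn2]
    _ ≤ φ v := h2
lemma quad_upper {p : ℕ} (M : Matrix (Fin p) (Fin p) ℝ) :
    ∀ v : Fin p → ℝ, v ⬝ᵥ M.mulVec v ≤ (∑ i, ∑ j, |M i j|) * ∑ i, v i ^ 2 := by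
  intro v
  have key : v ⬝ᵥ M.mulVec v = ∑ i, ∑ j, v i * (M i j * v j) := by
    simp [dotProduct, mulVec, Finset.mul_sum]
  rw [key, Finset.sum_mul]
  apply Finset.sum_le_sum
  intro i _
  rw [Finset.sum_mul]
  apply Finset.sum_le_sum
  intro j _
  have hvi : v i ^ 2 ≤ ∑ k, v k ^ 2 :=
    Finset.single_le_sum (fun k _ => sq_nonneg (v k)) (Finset.mem_univ i)
  have hvj : v j ^ 2 ≤ ∑ k, v k ^ 2 :=
    Finset.single_le_sum (fun k _ => sq_nonneg (v k)) (Finset.mem_univ j)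
  have h1 : v i * (M i j * v j) ≤ |M i j| * (|v i| * |v j|) := by
    calc v i * (M i j * v j) ≤ |v i * (M i j * v j)| := le_abs_self _
      _ = |M i j| * (|v i| * |v j|) := by rw [abs_mul, abs_mul]; ring
  refine h1.trans (mul_le_mul_of_nonneg_left ?_ (abs_nonneg _))
  nlinarith [sq_abs (v i), sq_abs (v j), sq_nonneg (|v i| - |v j|), abs_nonneg (v i), abs_nonneg (v j)]

lemma alpha_facts (f : ℝ → ℝ) (hf0 : ∀ x, 0 ≤ f x) (hfint : Integrable f)
    (hf1 : ∫ x : ℝ, f x = 1) (s0 s1 : ℝ) :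
    ((∫ v : ℝ, f (v - s0) * f (v - s0) / (f (v - s0) + f (v - s1)))
        + (∫ v : ℝ, f (v - s0) * f (v - s1) / (f (v - s0) + f (v - s1))) = 1)
    ∧ ((∫ v : ℝ, f (v - s1) * f (v - s1) / (f (v - s0) + f (v - s1)))
        + (∫ v : ℝ, f (v - s0) * f (v - s1) / (f (v - s0) + f (v - s1))) = 1)
    ∧ (0 ≤ ∫ v : ℝ, f (v - s0) * f (v - s1) / (f (v - s0) + f (v - s1)))
    ∧ ((∫ v : ℝ, f (v - s0) * f (v - s1) / (f (v - s0) + f (v - s1))) ≤ 1 / 2) := by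
  set g0 : ℝ → ℝ := fun v => f (v - s0) with hg0
  set g1 : ℝ → ℝ := fun v => f (v - s1) with hg1
  have hg0int : Integrable g0 := hfint.comp_sub_right s0
  have hg1int : Integrable g1 := hfint.comp_sub_right s1
  have hg0n : ∀ v, 0 ≤ g0 v := fun v => hf0 _
  have hg1n : ∀ v, 0 ≤ g1 v := fun v => hf0 _
  have hg0i : ∫ v, g0 v = 1 := by rw [hg0]; rw [integral_sub_right_eq_self f s0]; exact hf1
  have hg1i : ∫ v, g1 v = 1 := by rw [hg1]; rw [integral_sub_right_eq_self f s1]; exact hf1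
  set h00 : ℝ → ℝ := fun v => g0 v * g0 v / (g0 v + g1 v) with hh00
  set h11 : ℝ → ℝ := fun v => g1 v * g1 v / (g0 v + g1 v) with hh11
  set h01 : ℝ → ℝ := fun v => g0 v * g1 v / (g0 v + g1 v) with hh01
  have hnn : ∀ v, 0 ≤ h00 v ∧ 0 ≤ h11 v ∧ 0 ≤ h01 v := by
    intro v
    refine ⟨?_, ?_, ?_⟩ <;>
      exact div_nonneg (mul_nonneg (by first | exact hg0n v | exact hg1n v)
        (by first | exact hg0n v | exact hg1n v)) (add_nonneg (hg0n v) (hg1n v))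
  have hkey0 : ∀ v, h00 v + h01 v = g0 v := by
    intro v
    by_cases h : g0 v + g1 v = 0
    · have h0 : g0 v = 0 := le_antisymm (by nlinarith [hg1n v]) (hg0n v)
      simp [hh00, hh01, h, h0]
    · simp only [hh00, hh01]
      rw [← add_div, div_eq_iff h]
      ring
  have hkey1 : ∀ v, h11 v + h01 v = g1 v := by
    intro v
    by_cases h : g0 v + g1 v = 0
    · have h1 : g1 v = 0 := le_antisymm (by nlinarith [hg0n v]) (hg1n v)
      simp [hh11, hh01, h, h1]
    · simp only [hh11, hh01]
      rw [← add_div, div_eq_iff h]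
      ring
  have hub : ∀ v, h00 v ≤ g0 v ∧ h11 v ≤ g1 v ∧ h01 v ≤ g0 v := by
    intro v
    obtain ⟨a, b, c⟩ := hnn v
    refine ⟨?_, ?_, ?_⟩
    · have := hkey0 v; linarith
    · have := hkey1 v; linarith
    · have := hkey0 v; linarith
  have hg0m : AEMeasurable g0 volume := hg0int.aemeasurable
  have hg1m : AEMeasurable g1 volume := hg1int.aemeasurable
  have h00m : AEStronglyMeasurable h00 volume :=
    ((hg0m.mul hg0m).div (hg0m.add hg1m)).aestronglyMeasurable
  have h11m : AEStronglyMeasurable h11 volume :=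
    ((hg1m.mul hg1m).div (hg0m.add hg1m)).aestronglyMeasurable
  have h01m : AEStronglyMeasurable h01 volume :=
    ((hg0m.mul hg1m).div (hg0m.add hg1m)).aestronglyMeasurable
  have h00int : Integrable h00 := by
    refine hg0int.mono h00m (Filter.Eventually.of_forall fun v => ?_)
    rw [Real.norm_eq_abs, Real.norm_eq_abs, abs_of_nonneg (hnn v).1, abs_of_nonneg (hg0n v)]
    exact (hub v).1
  have h11int : Integrable h11 := by
    refine hg1int.mono h11m (Filter.Eventually.of_forall fun v => ?_)
    rw [Real.norm_eq_abs, Real.norm_eq_abs, abs_of_nonneg (hnn v).2.1, abs_of_nonneg (hg1n v)]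
    exact (hub v).2.1
  have h01int : Integrable h01 := by
    refine hg0int.mono h01m (Filter.Eventually.of_forall fun v => ?_)
    rw [Real.norm_eq_abs, Real.norm_eq_abs, abs_of_nonneg (hnn v).2.2, abs_of_nonneg (hg0n v)]
    exact (hub v).2.2
  refine ⟨?_, ?_, ?_, ?_⟩
  · rw [← integral_add h00int h01int]
    rw [show (fun a => h00 a + h01 a) = g0 from funext hkey0]
    exact hg0i
  · rw [← integral_add h11int h01int]
    rw [show (fun a => h11 a + h01 a) = g1 from funext hkey1]
    exact hg1i
  · exact integral_nonneg fun v => (hnn v).2.2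
  · have hbound : ∀ v, h01 v ≤ (g0 v + g1 v) / 4 := by
      intro v
      by_cases h : g0 v + g1 v = 0
      · have h0 : g0 v = 0 := le_antisymm (by nlinarith [hg1n v]) (hg0n v)
        simp [hh01, h, h0]
        exact div_nonneg (hg1n v) (by norm_num)
      · have hpos : 0 < g0 v + g1 v := lt_of_le_of_ne (add_nonneg (hg0n v) (hg1n v)) (Ne.symm h)
        rw [hh01]
        rw [div_le_div_iff₀ hpos (by norm_num : (0:ℝ) < 4)]
        nlinarith [sq_nonneg (g0 v - g1 v)]
    have : (∫ v, h01 v) ≤ ∫ v, (g0 v + g1 v) / 4 := by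
      refine integral_mono_of_nonneg (Filter.Eventually.of_forall fun v => (hnn v).2.2)
        ((hg0int.add hg1int).div_const 4) (Filter.Eventually.of_forall hbound)
    calc (∫ v, h01 v) ≤ ∫ v, (g0 v + g1 v) / 4 := this
      _ = ((∫ v, g0 v) + ∫ v, g1 v) / 4 := by
          rw [integral_div, integral_add hg0int hg1int]
      _ = 1 / 2 := by rw [hg0i, hg1i]; norm_num

set_option maxHeartbeats 1000000 in
/-- Lemma 5: some power of the limit backfitting matrix A is a strict ℓ²-contraction;
for p = 1 already A itself is. -/
theorem contraction_power
    (p : ℕ) (hp : 1 ≤ p)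
    (S : Matrix (Fin p) (Fin p) ℝ) (hS : S.PosDef)
    (μ0 μ1 : Fin p → ℝ)
    (f : ℝ → ℝ) (hf0 : ∀ x, 0 ≤ f x) (hfint : Integrable f) (hf1 : ∫ x : ℝ, f x = 1)
    (s0 s1 : ℝ)
    (α00 α11 α01 : ℝ)
    (hα00 : α00 = ∫ v : ℝ, f (v - s0) * f (v - s0) / (f (v - s0) + f (v - s1)))
    (hα11 : α11 = ∫ v : ℝ, f (v - s1) * f (v - s1) / (f (v - s0) + f (v - s1)))
    (hα01 : α01 = ∫ v : ℝ, f (v - s0) * f (v - s1) / (f (v - s0) + f (v - s1)))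
    (A : Matrix (Fin p) (Fin p) ℝ)
    (hA : A = (S + vecMulVec μ0 μ0 + vecMulVec μ1 μ1)⁻¹ *
      (α00 • vecMulVec μ0 μ0 + α11 • vecMulVec μ1 μ1 +
        α01 • (vecMulVec μ0 μ1 + vecMulVec μ1 μ0))) :
    (∃ k₀ : ℕ, 1 ≤ k₀ ∧ ∀ v : Fin p → ℝ, v ≠ 0 →
      Real.sqrt (∑ i, ((A ^ k₀).mulVec v i) ^ 2) < Real.sqrt (∑ i, (v i) ^ 2)) ∧
    (p = 1 → ∀ v : Fin p → ℝ, v ≠ 0 →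
      Real.sqrt (∑ i, (A.mulVec v i) ^ 2) < Real.sqrt (∑ i, (v i) ^ 2)) := by
  -- abbreviations
  set M : Matrix (Fin p) (Fin p) ℝ := S + vecMulVec μ0 μ0 + vecMulVec μ1 μ1 with hMdef
  set N : Matrix (Fin p) (Fin p) ℝ := α00 • vecMulVec μ0 μ0 + α11 • vecMulVec μ1 μ1 +
      α01 • (vecMulVec μ0 μ1 + vecMulVec μ1 μ0) with hNdef
  -- facts about the alphas
  obtain ⟨ha0, ha1, hβ0, hβh⟩ := alpha_facts f hf0 hfint hf1 s0 s1
  rw [← hα00, ← hα01] at ha0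
  rw [← hα11, ← hα01] at ha1
  rw [← hα01] at hβ0 hβh
  -- bilinear forms
  have hbN : ∀ u v : Fin p → ℝ, u ⬝ᵥ N.mulVec v =
      α00 * ((μ0 ⬝ᵥ u) * (μ0 ⬝ᵥ v)) + α11 * ((μ1 ⬝ᵥ u) * (μ1 ⬝ᵥ v)) +
      α01 * ((μ0 ⬝ᵥ u) * (μ1 ⬝ᵥ v) + (μ1 ⬝ᵥ u) * (μ0 ⬝ᵥ v)) := by
    intro u v
    simp only [hNdef, Matrix.add_mulVec, Matrix.smul_mulVec, dotProduct_add,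
      dotProduct_smul, smul_eq_mul, bilin_vecMulVec]
  have hNsymm : ∀ u v : Fin p → ℝ, u ⬝ᵥ N.mulVec v = v ⬝ᵥ N.mulVec u := by
    intro u v
    rw [hbN, hbN]
    ring
  have hqM : ∀ v : Fin p → ℝ, v ⬝ᵥ M.mulVec v
      = v ⬝ᵥ S.mulVec v + (μ0 ⬝ᵥ v) ^ 2 + (μ1 ⬝ᵥ v) ^ 2 := by
    intro v
    simp only [hMdef, Matrix.add_mulVec, dotProduct_add, bilin_vecMulVec]
    ring
  have hS0 : ∀ v : Fin p → ℝ, 0 ≤ v ⬝ᵥ S.mulVec v := by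
    intro v
    by_cases hv : v = 0
    · subst hv; simp
    · exact le_of_lt (by simpa using hS.dotProduct_mulVec_pos hv)
  have hSM : ∀ v : Fin p → ℝ, v ⬝ᵥ S.mulVec v ≤ v ⬝ᵥ M.mulVec v := by
    intro v
    rw [hqM v]
    nlinarith [sq_nonneg (μ0 ⬝ᵥ v), sq_nonneg (μ1 ⬝ᵥ v)]
  have hM0 : ∀ v : Fin p → ℝ, 0 ≤ v ⬝ᵥ M.mulVec v :=
    fun v => (hS0 v).trans (hSM v)
  have hα00eq : α00 = 1 - α01 := by linarith
  have hα11eq : α11 = 1 - α01 := by linarith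
  have hN0 : ∀ v : Fin p → ℝ, 0 ≤ v ⬝ᵥ N.mulVec v := by
    intro v
    rw [hbN v v, hα00eq, hα11eq]
    nlinarith [sq_nonneg (μ0 ⬝ᵥ v + μ1 ⬝ᵥ v), sq_nonneg (μ0 ⬝ᵥ v - μ1 ⬝ᵥ v)]
  have hNM : ∀ v : Fin p → ℝ, v ⬝ᵥ N.mulVec v + v ⬝ᵥ S.mulVec v ≤ v ⬝ᵥ M.mulVec v := by
    intro v
    rw [hbN v v, hqM v, hα00eq, hα11eq]
    nlinarith [sq_nonneg (μ0 ⬝ᵥ v - μ1 ⬝ᵥ v)]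
  -- M is positive definite
  have hMpos : M.PosDef := by
    apply Matrix.PosDef.of_dotProduct_mulVec_pos
    · ext i j
      have hs : S j i = S i j := by
        have := congrFun (congrFun hS.1 i) j
        simpa using this
      simp only [Matrix.conjTranspose_apply, star_trivial, hMdef, Matrix.add_apply,
        vecMulVec_apply]
      rw [hs]; ring
    · intro x hx
      rw [star_trivial]
      have hSx : 0 < x ⬝ᵥ S.mulVec x := by simpa using hS.dotProduct_mulVec_pos hx
      rw [hqM x]
      nlinarith [sq_nonneg (μ0 ⬝ᵥ x), sq_nonneg (μ1 ⬝ᵥ x)]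
  have hdet : IsUnit M.det := isUnit_iff_ne_zero.mpr hMpos.det_pos.ne'
  have hMA : ∀ v : Fin p → ℝ, M.mulVec (A.mulVec v) = N.mulVec v := by
    have hMN : M * A = N := by
      rw [hA, ← Matrix.mul_assoc, Matrix.mul_nonsing_inv _ hdet, Matrix.one_mul]
    intro v
    rw [Matrix.mulVec_mulVec, hMN]
  -- quantitative bounds
  obtain ⟨ε, hε, hεS⟩ := posdef_lower hp S hS
  set L : ℝ := ∑ i, ∑ j, |M i j| with hLdef
  have hqMle := quad_upper M
  -- a unit vector
  have hεL : ε ≤ L := by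
    set e : Fin p → ℝ := Pi.single ⟨0, hp⟩ 1 with he
    have hsum_e : ∑ i, e i ^ 2 = 1 := by
      rw [he]
      rw [Finset.sum_eq_single ⟨0, hp⟩]
      · simp
      · intro j _ hj; simp [Pi.single_apply, hj]
      · simp
    have h1 := hεS e
    have h2 := hqMle e
    have h3 := hSM e
    rw [hsum_e] at h1 h2
    linarith
  have hL : 0 < L := lt_of_lt_of_le hε hεL
  set c : ℝ := 1 - ε / L with hcdef
  have hc0 : 0 ≤ c := by
    have : ε / L ≤ 1 := (div_le_one hL).mpr hεL
    rw [hcdef]; linarith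
  have hc1 : c < 1 := by
    have : 0 < ε / L := div_pos hε hL
    rw [hcdef]; linarith
  have hc : ∀ v : Fin p → ℝ, v ⬝ᵥ N.mulVec v ≤ c * (v ⬝ᵥ M.mulVec v) := by
    intro v
    have h1 := hεS v
    have h2 := hqMle v
    have h3 := hNM v
    have h4 : ε / L * (v ⬝ᵥ M.mulVec v) ≤ ε / L * (L * ∑ i, v i ^ 2) :=
      mul_le_mul_of_nonneg_left h2 (div_nonneg hε.le hL.le)
    have h5 : ε / L * (L * ∑ i, v i ^ 2) = ε * ∑ i, v i ^ 2 := by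
      field_simp
    have hX : ε / L * (v ⬝ᵥ M.mulVec v) ≤ v ⬝ᵥ S.mulVec v := by linarith
    rw [hcdef, sub_mul, one_mul]
    linarith
  have hstep := step_contraction M N A hNsymm hMA hN0 hM0 c hc
  have hpow : ∀ (k : ℕ) (v : Fin p → ℝ),
      ((A ^ k).mulVec v) ⬝ᵥ M.mulVec ((A ^ k).mulVec v)
        ≤ (c ^ 2) ^ k * (v ⬝ᵥ M.mulVec v) := by
    intro k
    induction k with
    | zero => intro v; simp [Matrix.one_mulVec]
    | succ k ih =>
      intro v
      have heq : (A ^ (k + 1)).mulVec v = A.mulVec ((A ^ k).mulVec v) := by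
        rw [Matrix.mulVec_mulVec, ← pow_succ']
      rw [heq]
      calc (A.mulVec ((A ^ k).mulVec v)) ⬝ᵥ M.mulVec (A.mulVec ((A ^ k).mulVec v))
          ≤ c ^ 2 * (((A ^ k).mulVec v) ⬝ᵥ M.mulVec ((A ^ k).mulVec v)) :=
            hstep ((A ^ k).mulVec v)
        _ ≤ c ^ 2 * ((c ^ 2) ^ k * (v ⬝ᵥ M.mulVec v)) :=
            mul_le_mul_of_nonneg_left (ih v) (sq_nonneg c)
        _ = (c ^ 2) ^ (k + 1) * (v ⬝ᵥ M.mulVec v) := by ring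
  have hc2 : c ^ 2 < 1 := by nlinarith
  obtain ⟨k, hk⟩ := exists_pow_lt_of_lt_one (div_pos hε hL) hc2
  constructor
  · -- the power statement
    refine ⟨k + 1, Nat.le_add_left 1 k, fun v hv => ?_⟩
    have hk₀ : (c ^ 2) ^ (k + 1) < ε / L := by
      have h1 : (c ^ 2) ^ (k + 1) ≤ (c ^ 2) ^ k := by
        rw [pow_succ]
        nlinarith [pow_nonneg (sq_nonneg c) k]
      linarith
    have hsv : 0 < ∑ i, v i ^ 2 := by
      obtain ⟨i, hi⟩ := Function.ne_iff.mp hv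
      have hpos : 0 < v i ^ 2 := (sq_nonneg (v i)).lt_of_ne
        (fun h => hi (pow_eq_zero_iff two_ne_zero |>.mp h.symm))
      exact lt_of_lt_of_le hpos
        (Finset.single_le_sum (fun j _ => sq_nonneg (v j)) (Finset.mem_univ i))
    set w : Fin p → ℝ := (A ^ (k + 1)).mulVec v with hwdef
    have e1 : ε * ∑ i, w i ^ 2 ≤ w ⬝ᵥ S.mulVec w := hεS w
    have e2 : w ⬝ᵥ S.mulVec w ≤ w ⬝ᵥ M.mulVec w := hSM w
    have e3 : w ⬝ᵥ M.mulVec w ≤ (c ^ 2) ^ (k + 1) * (v ⬝ᵥ M.mulVec v) := hpow (k + 1) v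
    have e4 : v ⬝ᵥ M.mulVec v ≤ L * ∑ i, v i ^ 2 := hqMle v
    have e5 : (c ^ 2) ^ (k + 1) * (v ⬝ᵥ M.mulVec v)
        ≤ (c ^ 2) ^ (k + 1) * (L * ∑ i, v i ^ 2) :=
      mul_le_mul_of_nonneg_left e4 (pow_nonneg (sq_nonneg c) (k + 1))
    have e6 : (c ^ 2) ^ (k + 1) * L < ε := (lt_div_iff₀ hL).mp hk₀
    have e7 : (c ^ 2) ^ (k + 1) * (L * ∑ i, v i ^ 2) < ε * ∑ i, v i ^ 2 := by
      calc (c ^ 2) ^ (k + 1) * (L * ∑ i, v i ^ 2)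
          = ((c ^ 2) ^ (k + 1) * L) * ∑ i, v i ^ 2 := by ring
        _ < ε * ∑ i, v i ^ 2 := by exact mul_lt_mul_of_pos_right e6 hsv
    have e8 : ∑ i, w i ^ 2 < ∑ i, v i ^ 2 := by
      have : ε * ∑ i, w i ^ 2 < ε * ∑ i, v i ^ 2 := by linarith
      exact lt_of_mul_lt_mul_left (by linarith) hε.le
    exact Real.sqrt_lt_sqrt (Finset.sum_nonneg fun i _ => sq_nonneg (w i)) e8
  · -- the p = 1 statement
    intro hp1
    clear_value M N c L
    subst hp1
    intro v hv
    have hv0 : v 0 ≠ 0 := by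
      intro h
      apply hv
      funext i
      rw [Subsingleton.elim i (0 : Fin 1)]
      simpa using h
    have hq1 : ∀ w : Fin 1 → ℝ, w ⬝ᵥ M.mulVec w = w 0 * (M 0 0 * w 0) := by
      intro w
      simp [dotProduct, mulVec, Fin.sum_univ_one]
    have hM00 : 0 < M 0 0 := by
      have hne : (fun _ => (1:ℝ)) ≠ (0 : Fin 1 → ℝ) := by
        intro h
        have := congrFun h 0
        norm_num at this
      have h := hMpos.dotProduct_mulVec_pos hne
      rw [star_trivial, hq1] at h
      simpa using h
    have hstep1 := hstep v
    rw [hq1, hq1] at hstep1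
    have hv0sq : 0 < v 0 ^ 2 := (sq_nonneg (v 0)).lt_of_ne
      (fun h => hv0 (pow_eq_zero_iff two_ne_zero |>.mp h.symm))
    have key : (A.mulVec v 0) ^ 2 < (v 0) ^ 2 := by
      have h6 : (A.mulVec v 0) ^ 2 * M 0 0 ≤ (c ^ 2 * v 0 ^ 2) * M 0 0 := by nlinarith
      have h7 : (A.mulVec v 0) ^ 2 ≤ c ^ 2 * v 0 ^ 2 :=
        le_of_mul_le_mul_right h6 hM00
      nlinarith
    simp only [Fin.sum_univ_one]
    exact Real.sqrt_lt_sqrt (sq_nonneg _) key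
end

section
/- Fix integers p ≥ 1 and n > p+1. Let θ ∈ ℝ^p, and for each l ∈ {p+1,…,n} let φ_l ∈ ℝ^p, e_l ∈ ℝ, w_l ∈ ℝ be given; let b : ℝ → ℝ and define X_l := φ_lᵀ θ + b(e_l) + w_l. Let κ : ℝ → ℝ be any function such that Σ_{j=p+1}^n κ(e_l − e_j) ≠ 0 for each l ∈ {p+1,…,n}, and assume Σ_n := Σ_{l=p+1}^n φ_l φ_lᵀ is invertible. Given θ̂^{(k−1)} ∈ ℝ^p, define b̂^{(k−1)}(e) := [Σ_{l=p+1}^n (X_l − φ_lᵀ θ̂^{(k−1)}) κ(e − e_l)] / [Σ_{l=p+1}^n κ(e − e_l)] and θ̂^{(k)} := Σ_n^{−1} Σ_{l=p+1}^n φ_l (X_l − b̂^{(k−1)}(e_l)). Then θ − θ̂^{(k)} = A_n (θ − θ̂^{(k−1)}) + R^{(1)} + R^{(2)}, where A_n := Σ_n^{−1} Σ_{l=p+1}^n φ_l · [Σ_{j=p+1}^n φ_jᵀ κ(e_l − e_j)] / [Σ_{j=p+1}^n κ(e_l − e_j)], R^{(1)} := Σ_n^{−1} Σ_{l=p+1}^n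 φ_l · [Σ_{j=p+1}^n (b(e_j) − b(e_l) + w_j) κ(e_l − e_j)] / [Σ_{j=p+1}^n κ(e_l − e_j)], and R^{(2)} := −Σ_n^{−1} Σ_{l=p+1}^n φ_l w_l. -/
open Matrix

lemma myVecMulVec_mulVec {p : ℕ} (a u v : Fin p → ℝ) :
    (Matrix.vecMulVec a u).mulVec v = (u ⬝ᵥ v) • a := by
  funext i
  simp [Matrix.mulVec, Matrix.vecMulVec, dotProduct, Finset.mul_sum, mul_assoc,
    mul_comm, mul_left_comm]

lemma mySum_mulVec {p : ℕ} {ι : Type*} (t : Finset ι) (M : ι → Matrix (Fin p) (Fin p) ℝ)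
    (v : Fin p → ℝ) : (∑ l ∈ t, M l).mulVec v = ∑ l ∈ t, (M l).mulVec v := by
  funext i
  simp [Matrix.mulVec, dotProduct, Matrix.sum_apply, Finset.sum_mul]
  exact Finset.sum_comm

/-- The deterministic one-step backfitting error identity (formula (11)). -/
theorem backfitting_one_step_identity
    (p n : ℕ) (hp : 1 ≤ p) (hn : p + 1 < n)
    (θ : Fin p → ℝ) (φ : ℕ → Fin p → ℝ) (e : ℕ → ℝ) (w : ℕ → ℝ) (b : ℝ → ℝ)
    (X : ℕ → ℝ) (hXdef : ∀ l, X l = (∑ i, φ l i * θ i) + b (e l) + w l)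
    (κ : ℝ → ℝ)
    (hden : ∀ l ∈ Finset.Icc (p + 1) n, (∑ j ∈ Finset.Icc (p + 1) n, κ (e l - e j)) ≠ 0)
    (Smat : Matrix (Fin p) (Fin p) ℝ)
    (hS : Smat = ∑ l ∈ Finset.Icc (p + 1) n, Matrix.vecMulVec (φ l) (φ l))
    (hSinv : IsUnit Smat)
    (θprev : Fin p → ℝ)
    (bhat : ℝ → ℝ)
    (hbhat : ∀ x : ℝ, bhat x =
      (∑ l ∈ Finset.Icc (p + 1) n, (X l - ∑ i, φ l i * θprev i) * κ (x - e l)) /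
      (∑ l ∈ Finset.Icc (p + 1) n, κ (x - e l)))
    (θnew : Fin p → ℝ)
    (hθnew : θnew = Smat⁻¹.mulVec (∑ l ∈ Finset.Icc (p + 1) n, (X l - bhat (e l)) • φ l))
    (An : Matrix (Fin p) (Fin p) ℝ)
    (hAn : An = Smat⁻¹ * ∑ l ∈ Finset.Icc (p + 1) n, Matrix.vecMulVec (φ l)
      (fun i => (∑ j ∈ Finset.Icc (p + 1) n, φ j i * κ (e l - e j)) /
        (∑ j ∈ Finset.Icc (p + 1) n, κ (e l - e j))))
    (R1 R2 : Fin p → ℝ)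
    (hR1 : R1 = Smat⁻¹.mulVec (∑ l ∈ Finset.Icc (p + 1) n,
      ((∑ j ∈ Finset.Icc (p + 1) n, (b (e j) - b (e l) + w j) * κ (e l - e j)) /
        (∑ j ∈ Finset.Icc (p + 1) n, κ (e l - e j))) • φ l))
    (hR2 : R2 = -(Smat⁻¹.mulVec (∑ l ∈ Finset.Icc (p + 1) n, w l • φ l))) :
    θ - θnew = An.mulVec (θ - θprev) + R1 + R2 := by
  have hdet : IsUnit Smat.det := (Matrix.isUnit_iff_isUnit_det Smat).mp hSinv
  have hθ : θ = Smat⁻¹.mulVec (Smat.mulVec θ) := by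
    rw [Matrix.mulVec_mulVec, Matrix.nonsing_inv_mul Smat hdet, Matrix.one_mulVec]
  rw [hθnew, hAn, hR1, hR2, ← Matrix.mulVec_mulVec]
  conv_lhs => rw [hθ]
  rw [← Matrix.mulVec_sub, ← Matrix.mulVec_neg, ← Matrix.mulVec_add, ← Matrix.mulVec_add]
  refine congrArg Smat⁻¹.mulVec ?_
  rw [hS, mySum_mulVec, mySum_mulVec]
  simp only [myVecMulVec_mulVec]
  -- key scalar identity, per l
  have hscalar : ∀ l ∈ Finset.Icc (p + 1) n,
      (φ l ⬝ᵥ θ) - (X l - bhat (e l))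
      = ((fun i => (∑ j ∈ Finset.Icc (p + 1) n, φ j i * κ (e l - e j)) /
          (∑ j ∈ Finset.Icc (p + 1) n, κ (e l - e j))) ⬝ᵥ (θ - θprev))
        + ((∑ j ∈ Finset.Icc (p + 1) n, (b (e j) - b (e l) + w j) * κ (e l - e j)) /
          (∑ j ∈ Finset.Icc (p + 1) n, κ (e l - e j)))
        - w l := by
    intro l hl
    set D : ℝ := ∑ j ∈ Finset.Icc (p + 1) n, κ (e l - e j) with hD
    have hD0 : D ≠ 0 := hden l hl
    have hu : ((fun i => (∑ j ∈ Finset.Icc (p + 1) n, φ j i * κ (e l - e j)) / D) ⬝ᵥ (θ - θprev))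
        = (∑ j ∈ Finset.Icc (p + 1) n,
            ((∑ i, φ j i * θ i) - (∑ i, φ j i * θprev i)) * κ (e l - e j)) / D := by
      rw [dotProduct]
      simp only [Pi.sub_apply, div_mul_eq_mul_div]
      rw [← Finset.sum_div]
      congr 1
      simp only [Finset.sum_mul]
      rw [Finset.sum_comm]
      refine Finset.sum_congr rfl fun j _ => ?_
      rw [sub_mul, Finset.sum_mul, Finset.sum_mul, ← Finset.sum_sub_distrib]
      exact Finset.sum_congr rfl fun i _ => by ring
    rw [hu, hbhat (e l), hXdef l]
    simp only [hXdef]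
    have hsplit : ∑ j ∈ Finset.Icc (p + 1) n,
        ((∑ i, φ j i * θ i) + b (e j) + w j - (∑ i, φ j i * θprev i)) * κ (e l - e j)
        = (∑ j ∈ Finset.Icc (p + 1) n,
            ((∑ i, φ j i * θ i) - (∑ i, φ j i * θprev i)) * κ (e l - e j))
          + (∑ j ∈ Finset.Icc (p + 1) n, (b (e j) - b (e l) + w j) * κ (e l - e j))
          + b (e l) * D := by
      rw [hD, Finset.mul_sum, ← Finset.sum_add_distrib, ← Finset.sum_add_distrib]
      exact Finset.sum_congr rfl fun j _ => by ring
    rw [show (φ l ⬝ᵥ θ) = ∑ i, φ l i * θ i from rfl, hsplit]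
    rw [← hD]
    field_simp
    ring
  -- now combine the sums componentwise
  funext i
  simp only [Pi.sub_apply, Pi.add_apply, Pi.neg_apply, Finset.sum_apply, Pi.smul_apply,
    smul_eq_mul]
  have H : ∑ l ∈ Finset.Icc (p + 1) n,
      ((φ l ⬝ᵥ θ) * φ l i - (X l - bhat (e l)) * φ l i)
      = ∑ l ∈ Finset.Icc (p + 1) n,
        ((((fun i' => (∑ j ∈ Finset.Icc (p + 1) n, φ j i' * κ (e l - e j)) /
            (∑ j ∈ Finset.Icc (p + 1) n, κ (e l - e j))) ⬝ᵥ (θ - θprev)) * φ l i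
          + ((∑ j ∈ Finset.Icc (p + 1) n, (b (e j) - b (e l) + w j) * κ (e l - e j)) /
            (∑ j ∈ Finset.Icc (p + 1) n, κ (e l - e j))) * φ l i)
          - w l * φ l i) :=
    Finset.sum_congr rfl fun l hl => by
      have := hscalar l hl
      linear_combination (φ l i) * this
  rw [Finset.sum_sub_distrib, Finset.sum_sub_distrib, Finset.sum_add_distrib] at H
  linarith [H]
end
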